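/- arXiv:1604.04141 — 2 statements merged into one kernel-verified Lean document; each statement's English description precedes it below -/
import Mathlib

section
/- Let A and B be n×n complex positive definite matrices, and define A♮B := A^{1/2}(B^{1/2}A^{-1}B^{1/2})^{1/2}A^{1/2}. Then the spectral norm (largest singular value) satisfies ‖A♮B‖ ≥ ‖A^{1/2}B^{1/2}‖. -/
open scoped ComplexOrder Matrix Classical

/-- The positive semidefinite square root of a positive semidefinite matrix
(junk value `0` if the matrix is not positive semidefinite). -/
noncomputable def sqrtm {n : ℕ} (A : Matrix (Fin n) (Fin n) ℂ) : Matrix (Fin n) (Fin n) ℂ :=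
  if h : A.PosSemidef then
    (h.1.eigenvectorUnitary : Matrix (Fin n) (Fin n) ℂ) *
      Matrix.diagonal ((↑) ∘ (√·) ∘ h.1.eigenvalues) *
      (star h.1.eigenvectorUnitary : Matrix (Fin n) (Fin n) ℂ)
  else 0

/-- The absolute value `|X| = (Xᴴ X)^{1/2}` of a matrix. -/
noncomputable def absm {n : ℕ} (X : Matrix (Fin n) (Fin n) ℂ) : Matrix (Fin n) (Fin n) ℂ :=
  sqrtm (Xᴴ * X)

/-- The spectral norm of a (rectangular) complex matrix: the operator norm of the
induced linear map between Euclidean spaces, i.e. the largest singular value. -/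
noncomputable def specNorm {m n : ℕ} (X : Matrix (Fin m) (Fin n) ℂ) : ℝ :=
  ‖LinearMap.toContinuousLinearMap (Matrix.toEuclideanLin X)‖


/-- The mean `A ♮ B := A^{1/2} (B^{1/2} A⁻¹ B^{1/2})^{1/2} A^{1/2}` of positive definite
matrices. -/
noncomputable def naturalMean {n : ℕ} (A B : Matrix (Fin n) (Fin n) ℂ) :
    Matrix (Fin n) (Fin n) ℂ :=
  sqrtm A * sqrtm (sqrtm B * A⁻¹ * sqrtm B) * sqrtm A

section Auxiliary

open Matrix
open scoped Matrix.Norms.L2Operator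

variable {n : ℕ}

/-- Repackaging of a bare vector as an element of Euclidean space. -/
noncomputable abbrev euc {n : ℕ} (x : Fin n → ℂ) : EuclideanSpace ℂ (Fin n) :=
  (WithLp.equiv 2 (Fin n → ℂ)).symm x

lemma spec_eq_l2 (X : Matrix (Fin n) (Fin n) ℂ) : specNorm X = ‖X‖ := rfl

lemma sqrtm_eq {A : Matrix (Fin n) (Fin n) ℂ} (h : A.PosSemidef) : sqrtm A =
    (h.1.eigenvectorUnitary : Matrix (Fin n) (Fin n) ℂ) *
      Matrix.diagonal ((↑) ∘ (√·) ∘ h.1.eigenvalues) *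
      (star h.1.eigenvectorUnitary : Matrix (Fin n) (Fin n) ℂ) := dif_pos h

lemma sqrtm_posSemidef {A : Matrix (Fin n) (Fin n) ℂ} (h : A.PosSemidef) :
    (sqrtm A).PosSemidef := by
  rw [sqrtm_eq h]
  have hd : (Matrix.diagonal ((↑) ∘ (√·) ∘ h.1.eigenvalues) :
      Matrix (Fin n) (Fin n) ℂ).PosSemidef := by
    rw [Matrix.posSemidef_diagonal_iff]
    intro i
    simp only [Function.comp_apply]
    exact_mod_cast Real.sqrt_nonneg _
  have := hd.mul_mul_conjTranspose_same (h.1.eigenvectorUnitary : Matrix (Fin n) (Fin n) ℂ)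
  simpa [Matrix.star_eq_conjTranspose] using this

lemma sqrtm_mul_self {A : Matrix (Fin n) (Fin n) ℂ} (h : A.PosSemidef) :
    sqrtm A * sqrtm A = A := by
  rw [sqrtm_eq h]
  have hUU : (star h.1.eigenvectorUnitary : Matrix (Fin n) (Fin n) ℂ) *
      (h.1.eigenvectorUnitary : Matrix (Fin n) (Fin n) ℂ) = 1 := by simp
  have hDD : (Matrix.diagonal ((↑) ∘ (√·) ∘ h.1.eigenvalues) : Matrix (Fin n) (Fin n) ℂ) *
      Matrix.diagonal ((↑) ∘ (√·) ∘ h.1.eigenvalues) =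
      Matrix.diagonal (RCLike.ofReal ∘ h.1.eigenvalues) := by
    rw [Matrix.diagonal_mul_diagonal]
    congr 1
    funext i
    simp only [Function.comp_apply]
    rw [← Complex.ofReal_mul, Real.mul_self_sqrt (h.eigenvalues_nonneg i)]
    rfl
  conv_rhs => rw [h.1.spectral_theorem, Unitary.conjStarAlgAut_apply]
  calc _ = (h.1.eigenvectorUnitary : Matrix (Fin n) (Fin n) ℂ) *
        (Matrix.diagonal ((↑) ∘ (√·) ∘ h.1.eigenvalues) *
        ((star h.1.eigenvectorUnitary : Matrix (Fin n) (Fin n) ℂ) *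
        (h.1.eigenvectorUnitary : Matrix (Fin n) (Fin n) ℂ)) *
        Matrix.diagonal ((↑) ∘ (√·) ∘ h.1.eigenvalues)) *
        (star h.1.eigenvectorUnitary : Matrix (Fin n) (Fin n) ℂ) := by simp only [mul_assoc]
    _ = _ := by rw [hUU, Matrix.mul_one, hDD]

lemma sqrtm_isUnit {A : Matrix (Fin n) (Fin n) ℂ} (h : A.PosDef) : IsUnit (sqrtm A) := by
  rw [Matrix.isUnit_iff_isUnit_det]
  have hdet : IsUnit (A.det) := isUnit_iff_ne_zero.mpr (ne_of_gt h.det_pos)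
  have hmul : (sqrtm A).det * (sqrtm A).det = A.det := by
    rw [← Matrix.det_mul, sqrtm_mul_self h.posSemidef]
  rw [← hmul] at hdet
  exact isUnit_of_mul_isUnit_left hdet

lemma posDef_of_posSemidef_isUnit {S : Matrix (Fin n) (Fin n) ℂ} (h : S.PosSemidef)
    (hu : IsUnit S) : S.PosDef := by
  refine Matrix.PosDef.of_dotProduct_mulVec_pos h.1 (fun x hx => ?_)
  have h0 : S *ᵥ x ≠ 0 := by
    intro hSx
    apply hx
    have := Matrix.mulVec_injective_iff_isUnit.mpr hu (a₁ := x) (a₂ := 0)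
    simpa [hSx] using this
  have hne : star x ⬝ᵥ S *ᵥ x ≠ 0 := fun hc => h0 ((h.dotProduct_mulVec_zero_iff x).mp hc)
  exact lt_of_le_of_ne (h.dotProduct_mulVec_nonneg x) (Ne.symm hne)

lemma posDef_conj {M : Matrix (Fin n) (Fin n) ℂ} (hM : M.PosDef)
    {P : Matrix (Fin n) (Fin n) ℂ} (hP : IsUnit P) : (Pᴴ * M * P).PosDef := by
  refine Matrix.PosDef.of_dotProduct_mulVec_pos (Matrix.isHermitian_conjTranspose_mul_mul P hM.1) (fun x hx => ?_)
  have hPx : P *ᵥ x ≠ 0 := by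
    intro h
    apply hx
    have := Matrix.mulVec_injective_iff_isUnit.mpr hP (a₁ := x) (a₂ := 0)
    simpa [h] using this
  have : star x ⬝ᵥ (Pᴴ * M * P) *ᵥ x = star (P *ᵥ x) ⬝ᵥ M *ᵥ (P *ᵥ x) := by
    simp only [star_mulVec, dotProduct_mulVec, vecMul_vecMul]
  rw [this]
  exact hM.dotProduct_mulVec_pos hPx

lemma posSemidef_smul {M : Matrix (Fin n) (Fin n) ℂ} (hM : M.PosSemidef) {t : ℝ} (ht : 0 ≤ t) :
    ((t : ℂ) • M).PosSemidef := by
  have h := hM.conjTranspose_mul_mul_same (((Real.sqrt t : ℝ) : ℂ) • (1 : Matrix (Fin n) (Fin n) ℂ))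
  have e : ((((Real.sqrt t : ℝ) : ℂ) • (1 : Matrix (Fin n) (Fin n) ℂ))ᴴ * M *
      (((Real.sqrt t : ℝ) : ℂ) • (1 : Matrix (Fin n) (Fin n) ℂ))) = (t : ℂ) • M := by
    rw [Matrix.conjTranspose_smul]
    simp only [Matrix.conjTranspose_one, Matrix.smul_mul, Matrix.mul_smul, Matrix.one_mul,
      Matrix.mul_one, smul_smul, Complex.star_def, Complex.conj_ofReal]
    rw [← Complex.ofReal_mul, Real.mul_self_sqrt ht]
  rwa [e] at h

lemma posSemidef_sub_of_sq {X Y : Matrix (Fin n) (Fin n) ℂ} (hX : X.PosSemidef)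
    (hXY : (X + Y).PosDef) (hY : Y.IsHermitian)
    (h : (Y * Y - X * X).PosSemidef) : (Y - X).PosSemidef := by
  have hH : (Y - X).IsHermitian := hY.sub hX.1
  refine hH.posSemidef_iff_eigenvalues_nonneg.mpr (fun i => ?_)
  set μ : ℝ := hH.eigenvalues i with hμ
  set u : Fin n → ℂ := ⇑(hH.eigenvectorBasis i) with hu
  have heig : (Y - X) *ᵥ u = (μ : ℂ) • u := by
    rw [hH.mulVec_eigenvectorBasis i]
    ext j
    simp only [Pi.smul_apply, Complex.real_smul, smul_eq_mul]
    rfl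
  have hune : u ≠ 0 := by
    intro h0
    have h1 : (hH.eigenvectorBasis i : EuclideanSpace ℂ (Fin n)) = 0 := (WithLp.ofLp_eq_zero 2).mp h0
    have := hH.eigenvectorBasis.orthonormal.1 i
    rw [h1] at this
    simp at this
  have hp : (0:ℂ) < star u ⬝ᵥ (X + Y) *ᵥ u := hXY.dotProduct_mulVec_pos hune
  have hq : (0:ℂ) ≤ star u ⬝ᵥ (Y * Y - X * X) *ᵥ u := h.dotProduct_mulVec_nonneg u
  have hmat : (X + Y) * (Y - X) + (Y - X) * (X + Y) = (Y * Y - X * X) + (Y * Y - X * X) := by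
    noncomm_ring
  have hs1 : star u ⬝ᵥ ((X + Y) * (Y - X)) *ᵥ u = (μ : ℂ) * (star u ⬝ᵥ (X + Y) *ᵥ u) := by
    rw [← Matrix.mulVec_mulVec, heig, Matrix.mulVec_smul, dotProduct_smul]
    simp [smul_eq_mul]
  have hs2 : star u ⬝ᵥ ((Y - X) * (X + Y)) *ᵥ u = (μ : ℂ) * (star u ⬝ᵥ (X + Y) *ᵥ u) := by
    rw [← Matrix.mulVec_mulVec, Matrix.dotProduct_mulVec]
    have : Matrix.vecMul (star u) (Y - X) = star ((Y - X) *ᵥ u) := by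
      rw [Matrix.star_mulVec, hH.eq]
    rw [this, heig, star_smul, smul_dotProduct]
    simp [smul_eq_mul, Complex.conj_ofReal, Matrix.dotProduct_mulVec]
  have hkey : star u ⬝ᵥ (Y * Y - X * X) *ᵥ u = (μ : ℂ) * (star u ⬝ᵥ (X + Y) *ᵥ u) := by
    have happ := congrArg (fun M => star u ⬝ᵥ M *ᵥ u) hmat
    simp only [Matrix.add_mulVec, dotProduct_add] at happ
    rw [hs1, hs2] at happ
    have h2 : (2:ℂ) * (star u ⬝ᵥ (Y * Y - X * X) *ᵥ u)
        = (2:ℂ) * ((μ : ℂ) * (star u ⬝ᵥ (X + Y) *ᵥ u)) := by linear_combination - happ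
    exact mul_left_cancel₀ two_ne_zero h2
  set p := star u ⬝ᵥ (X + Y) *ᵥ u
  have hpre : 0 < p.re := (Complex.lt_def.mp hp).1
  have hqre : 0 ≤ ((μ:ℂ) * p).re := by rw [← hkey]; exact (Complex.le_def.mp hq).1
  have him : p.im = 0 := ((Complex.lt_def.mp hp).2).symm
  have : ((μ:ℂ) * p).re = μ * p.re := by
    simp [Complex.mul_re, him]
  rw [this] at hqre
  by_contra hlt
  push_neg at hlt
  have : μ * p.re < 0 := mul_neg_of_neg_of_pos hlt hpre
  linarith

lemma dot_conj (P Q : Matrix (Fin n) (Fin n) ℂ) (x : Fin n → ℂ) :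
    star (P *ᵥ x) ⬝ᵥ (Q *ᵥ x) = star x ⬝ᵥ (Pᴴ * Q) *ᵥ x := by
  simp [Matrix.star_mulVec, Matrix.dotProduct_mulVec, Matrix.vecMul_vecMul]

lemma dot_conj' (M P : Matrix (Fin n) (Fin n) ℂ) (x : Fin n → ℂ) :
    star x ⬝ᵥ (Pᴴ * M * P) *ᵥ x = star (P *ᵥ x) ⬝ᵥ M *ᵥ (P *ᵥ x) := by
  rw [Matrix.mulVec_mulVec, dot_conj, mul_assoc]

lemma dot_self_eq (z : Fin n → ℂ) :
    star z ⬝ᵥ z = ((‖euc z‖ ^ 2 : ℝ) : ℂ) := by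
  have : star z ⬝ᵥ z = (inner ℂ (euc z) (euc z) : ℂ) := by
    rw [EuclideanSpace.inner_eq_star_dotProduct, dotProduct_comm]; rfl
  rw [this, inner_self_eq_norm_sq_to_K]
  norm_cast

lemma norm_mulVec_le (M : Matrix (Fin n) (Fin n) ℂ) (x : Fin n → ℂ) :
    ‖euc (M *ᵥ x)‖ ≤ ‖M‖ * ‖euc x‖ :=
  M.l2_opNorm_mulVec (euc x)

lemma re_dot_le (M : Matrix (Fin n) (Fin n) ℂ) (x : Fin n → ℂ) :
    (star x ⬝ᵥ M *ᵥ x).re ≤ ‖M‖ * ‖euc x‖ ^ 2 := by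
  have h1 : star x ⬝ᵥ M *ᵥ x = (inner ℂ (euc x) (euc (M *ᵥ x)) : ℂ) := by
    rw [EuclideanSpace.inner_eq_star_dotProduct, dotProduct_comm]; rfl
  rw [h1]
  calc (inner ℂ (euc x) (euc (M *ᵥ x)) : ℂ).re
      ≤ ‖(inner ℂ (euc x) (euc (M *ᵥ x)) : ℂ)‖ := Complex.re_le_norm _
    _ ≤ ‖euc x‖ * ‖euc (M *ᵥ x)‖ := norm_inner_le_norm _ _
    _ ≤ ‖euc x‖ * (‖M‖ * ‖euc x‖) := by
        have := norm_mulVec_le M x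
        have hy : (0:ℝ) ≤ ‖euc x‖ := norm_nonneg _
        nlinarith [norm_nonneg (euc (M *ᵥ x))]
    _ = ‖M‖ * ‖euc x‖ ^ 2 := by ring

lemma norm_le_bound (M : Matrix (Fin n) (Fin n) ℂ) (r : ℝ) (hr : 0 ≤ r)
    (h : ∀ x : Fin n → ℂ, ‖euc (M *ᵥ x)‖ ≤ r * ‖euc x‖) : ‖M‖ ≤ r := by
  rw [Matrix.l2_opNorm_def]
  exact ContinuousLinearMap.opNorm_le_bound _ hr (fun y => h y)

lemma norm_mul_conjTranspose_self (X : Matrix (Fin n) (Fin n) ℂ) : ‖X * Xᴴ‖ = ‖X‖ * ‖X‖ := by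
  have := Matrix.l2_opNorm_conjTranspose_mul_self Xᴴ
  rwa [Matrix.conjTranspose_conjTranspose, Matrix.l2_opNorm_conjTranspose] at this

end Auxiliary

set_option maxHeartbeats 2000000 in
open Matrix in
open scoped Matrix.Norms.L2Operator in
/-- For positive definite `A, B`, the spectral norm satisfies `‖A ♮ B‖ ≥ ‖A^{1/2} B^{1/2}‖`. -/
theorem specNorm_sqrt_mul_sqrt_le_specNorm_naturalMean {n : ℕ}
    (A B : Matrix (Fin n) (Fin n) ℂ) (hA : A.PosDef) (hB : B.PosDef) :
    specNorm (sqrtm A * sqrtm B) ≤ specNorm (naturalMean A B) := by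
  set a := sqrtm A with ha
  set b := sqrtm B with hb
  have haps : a.PosSemidef := sqrtm_posSemidef hA.posSemidef
  have hbps : b.PosSemidef := sqrtm_posSemidef hB.posSemidef
  have haU : IsUnit a := sqrtm_isUnit hA
  have hbU : IsUnit b := sqrtm_isUnit hB
  have haH : aᴴ = a := haps.isHermitian
  have hbH : bᴴ = b := hbps.isHermitian
  have haa : a * a = A := sqrtm_mul_self hA.posSemidef
  have hbb : b * b = B := sqrtm_mul_self hB.posSemidef
  have hAdet : IsUnit A.det := (Matrix.isUnit_iff_isUnit_det A).mp hA.isUnit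
  have hBdet : IsUnit B.det := (Matrix.isUnit_iff_isUnit_det B).mp hB.isUnit
  have hbdet : IsUnit b.det := (Matrix.isUnit_iff_isUnit_det b).mp hbU
  have hG : (b * A⁻¹ * b).PosDef := by
    have := posDef_conj hA.inv hbU
    rwa [hbH] at this
  set C := sqrtm (b * A⁻¹ * b) with hC
  have hCps : C.PosSemidef := sqrtm_posSemidef hG.posSemidef
  have hCpd : C.PosDef := posDef_of_posSemidef_isUnit hCps (sqrtm_isUnit hG)
  have hCH : Cᴴ = C := hCps.isHermitian
  have hCC : C * C = b * A⁻¹ * b := sqrtm_mul_self hG.posSemidef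
  set D := sqrtm C with hD
  have hDps : D.PosSemidef := sqrtm_posSemidef hCpd.posSemidef
  have hDU : IsUnit D := sqrtm_isUnit hCpd
  have hDH : Dᴴ = D := hDps.isHermitian
  have hDD : D * D = C := sqrtm_mul_self hCpd.posSemidef
  have hDdet : IsUnit D.det := (Matrix.isUnit_iff_isUnit_det D).mp hDU
  have hMeq : naturalMean A B = a * C * a := rfl
  rw [spec_eq_l2, spec_eq_l2, hMeq]
  set t := ‖a * b‖ with htdef
  rcases eq_or_lt_of_le (norm_nonneg (a * b)) with h0 | htpos
  · have ht0 : t = 0 := by rw [htdef, ← h0]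
    rw [ht0]; exact norm_nonneg _
  -- `t² = ‖b A b‖`
  have hbab : (a * b)ᴴ * (a * b) = b * A * b := by
    rw [Matrix.conjTranspose_mul, haH, hbH, show b * a * (a * b) = b * (a * a) * b by
      noncomm_ring, haa]
  have hSpd : (b * A * b).PosDef := by
    have := posDef_conj hA hbU
    rwa [hbH] at this
  have htt : t * t = ‖b * A * b‖ := by
    rw [← Matrix.l2_opNorm_conjTranspose_mul_self (a * b), hbab]
  -- `L := t²•1 - bAb` is PSD
  have hL : ((((t * t : ℝ)) : ℂ) • (1 : Matrix (Fin n) (Fin n) ℂ) - b * A * b).PosSemidef := by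
    refine Matrix.PosSemidef.of_dotProduct_mulVec_nonneg ?_ ?_
    · have h1 : ((((t * t : ℝ)) : ℂ) • (1 : Matrix (Fin n) (Fin n) ℂ)).IsHermitian := by
        unfold Matrix.IsHermitian
        rw [Matrix.conjTranspose_smul, Matrix.conjTranspose_one]
        simp [Complex.star_def, Complex.conj_ofReal]
      exact h1.sub hSpd.isHermitian
    · intro x
      rw [Matrix.sub_mulVec, dotProduct_sub, Matrix.smul_mulVec,
        Matrix.one_mulVec, dotProduct_smul]
      have e1 : star x ⬝ᵥ (b * A * b) *ᵥ x = star ((a * b) *ᵥ x) ⬝ᵥ ((a * b) *ᵥ x) := by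
        rw [dot_conj, hbab]
      rw [e1, dot_self_eq ((a * b) *ᵥ x), dot_self_eq x]
      have hnv : ‖euc ((a * b) *ᵥ x)‖ ≤ t * ‖euc x‖ := norm_mulVec_le (a * b) x
      rw [smul_eq_mul, ← Complex.ofReal_mul, ← Complex.ofReal_sub]
      rw [Complex.zero_le_real]
      nlinarith [norm_nonneg (euc ((a * b) *ᵥ x)), norm_nonneg (euc x)]
  -- `K := t•B⁻¹ - C⁻¹` is PSD
  have hBinv : B⁻¹ = b⁻¹ * b⁻¹ := by rw [← hbb, Matrix.mul_inv_rev]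
  have hCinv2 : C⁻¹ * C⁻¹ = b⁻¹ * A * b⁻¹ := by
    rw [← Matrix.mul_inv_rev, hCC, Matrix.mul_inv_rev, Matrix.mul_inv_rev,
      Matrix.nonsing_inv_nonsing_inv A hAdet, mul_assoc]
  have hK : (((t : ℂ) • B⁻¹) - C⁻¹).PosSemidef := by
    have hXps : C⁻¹.PosSemidef := hCpd.inv.posSemidef
    have hYherm : ((t : ℂ) • B⁻¹).IsHermitian := by
      unfold Matrix.IsHermitian
      rw [Matrix.conjTranspose_smul, hB.inv.isHermitian.eq]
      simp [Complex.star_def, Complex.conj_ofReal]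
    have hYps : ((t : ℂ) • B⁻¹).PosSemidef := posSemidef_smul hB.inv.posSemidef (le_of_lt htpos)
    have hXYpd : (C⁻¹ + (t : ℂ) • B⁻¹).PosDef := hCpd.inv.add_posSemidef hYps
    have hsq : (((t : ℂ) • B⁻¹) * ((t : ℂ) • B⁻¹) - C⁻¹ * C⁻¹).PosSemidef := by
      have hconj := hL.conjTranspose_mul_mul_same B⁻¹
      have heq : (B⁻¹)ᴴ * ((((t * t : ℝ)) : ℂ) • (1 : Matrix (Fin n) (Fin n) ℂ) - b * A * b)
          * B⁻¹ = ((t : ℂ) • B⁻¹) * ((t : ℂ) • B⁻¹) - C⁻¹ * C⁻¹ := by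
        rw [hB.inv.isHermitian.eq, hCinv2]
        have hb1 : b⁻¹ * b = 1 := Matrix.nonsing_inv_mul b hbdet
        have hb2 : b * b⁻¹ = 1 := Matrix.mul_nonsing_inv b hbdet
        have hmid : B⁻¹ * (b * A * b) * B⁻¹ = b⁻¹ * A * b⁻¹ := by
          rw [hBinv]
          calc b⁻¹ * b⁻¹ * (b * A * b) * (b⁻¹ * b⁻¹)
              = b⁻¹ * ((b⁻¹ * b) * A * (b * b⁻¹)) * b⁻¹ := by noncomm_ring
            _ = b⁻¹ * A * b⁻¹ := by rw [hb1, hb2, Matrix.one_mul, Matrix.mul_one]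
        rw [Matrix.mul_sub, Matrix.sub_mul, hmid]
        congr 1
        rw [Matrix.mul_smul, Matrix.mul_one, Matrix.smul_mul, Matrix.smul_mul, Matrix.mul_smul,
          smul_smul, ← Complex.ofReal_mul]
      rwa [heq] at hconj
    exact posSemidef_sub_of_sq hXps hXYpd hYherm hsq
  -- pointwise bound `re⟨x, bC⁻¹b x⟩ ≤ t ‖x‖²`
  have hW : ∀ x : Fin n → ℂ, (star x ⬝ᵥ (b * C⁻¹ * b) *ᵥ x).re ≤ t * ‖euc x‖ ^ 2 := by
    intro x
    have hWps : (b * (((t : ℂ) • B⁻¹) - C⁻¹) * b).PosSemidef := by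
      have := hK.conjTranspose_mul_mul_same b
      rwa [hbH] at this
    have hb1 : b⁻¹ * b = 1 := Matrix.nonsing_inv_mul b hbdet
    have hb2 : b * b⁻¹ = 1 := Matrix.mul_nonsing_inv b hbdet
    have hexp : b * (((t : ℂ) • B⁻¹) - C⁻¹) * b
        = (t : ℂ) • (1 : Matrix (Fin n) (Fin n) ℂ) - b * C⁻¹ * b := by
      rw [Matrix.mul_sub, Matrix.sub_mul]
      congr 1
      rw [Matrix.mul_smul, Matrix.smul_mul, hBinv,
        show b * (b⁻¹ * b⁻¹) * b = (b * b⁻¹) * (b⁻¹ * b) by noncomm_ring, hb1, hb2,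
        Matrix.one_mul]
    have := hWps.dotProduct_mulVec_nonneg x
    rw [hexp, Matrix.sub_mulVec, dotProduct_sub, Matrix.smul_mulVec,
      Matrix.one_mulVec, dotProduct_smul, dot_self_eq x] at this
    have hre := (Complex.le_def.mp this).1
    rw [smul_eq_mul] at hre
    simp only [Complex.sub_re, Complex.mul_re, Complex.ofReal_re, Complex.ofReal_im,
      Complex.zero_re] at hre
    nlinarith [hre]
  -- core estimate
  have hcore : ∀ x : Fin n → ℂ,
      (star x ⬝ᵥ (b * A * b) *ᵥ x).re ≤ (‖a * C * a‖ * t) * ‖euc x‖ ^ 2 := by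
    intro x
    set v := b *ᵥ x with hv
    set z := D⁻¹ *ᵥ v with hz
    have hDz : D *ᵥ z = v := by
      rw [hz, Matrix.mulVec_mulVec, Matrix.mul_nonsing_inv D hDdet, Matrix.one_mulVec]
    have e1 : star x ⬝ᵥ (b * A * b) *ᵥ x = star v ⬝ᵥ A *ᵥ v := by
      have := dot_conj' A b x
      rwa [hbH] at this
    have e2 : star v ⬝ᵥ A *ᵥ v = star z ⬝ᵥ (D * A * D) *ᵥ z := by
      have := dot_conj' A D z
      rw [hDH, hDz] at this
      exact this.symm
    have e4 : ‖D * A * D‖ = ‖a * C * a‖ := by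
      have lhs : D * A * D = (a * D)ᴴ * (a * D) := by
        rw [Matrix.conjTranspose_mul, haH, hDH, show D * a * (a * D) = D * (a * a) * D by
          noncomm_ring, haa]
      have rhs : a * C * a = (a * D) * (a * D)ᴴ := by
        rw [Matrix.conjTranspose_mul, haH, hDH, show a * D * (D * a) = a * (D * D) * a by
          noncomm_ring, hDD]
      rw [lhs, rhs, Matrix.l2_opNorm_conjTranspose_mul_self, norm_mul_conjTranspose_self]
    have e5 : (‖euc z‖ ^ 2 : ℝ) = (star x ⬝ᵥ (b * C⁻¹ * b) *ᵥ x).re := by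
      have h1 : star z ⬝ᵥ z = star v ⬝ᵥ C⁻¹ *ᵥ v := by
        rw [hz, dot_conj]
        congr 2
        rw [Matrix.conjTranspose_nonsing_inv, hDH, ← Matrix.mul_inv_rev, hDD]
      have h2 : star v ⬝ᵥ C⁻¹ *ᵥ v = star x ⬝ᵥ (b * C⁻¹ * b) *ᵥ x := by
        have := dot_conj' C⁻¹ b x
        rw [hbH] at this
        exact this.symm
      have h3 := dot_self_eq z
      rw [h1, h2] at h3
      have := congrArg Complex.re h3
      simp only [Complex.ofReal_re] at this
      exact this.symm
    calc (star x ⬝ᵥ (b * A * b) *ᵥ x).re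
        = (star z ⬝ᵥ (D * A * D) *ᵥ z).re := by rw [e1, e2]
      _ ≤ ‖D * A * D‖ * ‖euc z‖ ^ 2 := re_dot_le _ _
      _ = ‖a * C * a‖ * (star x ⬝ᵥ (b * C⁻¹ * b) *ᵥ x).re := by rw [e4, e5]
      _ ≤ ‖a * C * a‖ * (t * ‖euc x‖ ^ 2) := by
          have := hW x
          have hnn : (0:ℝ) ≤ ‖a * C * a‖ := norm_nonneg _
          nlinarith
      _ = (‖a * C * a‖ * t) * ‖euc x‖ ^ 2 := by ring
  -- from the quadratic bound to the norm bound
  have hr : (0:ℝ) ≤ ‖a * C * a‖ * t := mul_nonneg (norm_nonneg _) (le_of_lt htpos)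
  have hSbound : ‖b * A * b‖ ≤ ‖a * C * a‖ * t := by
    set q := sqrtm (b * A * b) with hq
    have hqps : q.PosSemidef := sqrtm_posSemidef hSpd.posSemidef
    have hqq : q * q = b * A * b := sqrtm_mul_self hSpd.posSemidef
    have hqH : qᴴ = q := hqps.isHermitian
    have hnormq : ‖b * A * b‖ = ‖q‖ * ‖q‖ := by
      rw [← hqq, show q * q = qᴴ * q by rw [hqH], Matrix.l2_opNorm_conjTranspose_mul_self]
    have hqle : ‖q‖ ≤ Real.sqrt (‖a * C * a‖ * t) := by
      apply norm_le_bound q _ (Real.sqrt_nonneg _)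
      intro x
      have h1 : (‖euc (q *ᵥ x)‖ : ℝ) ^ 2 = (star x ⬝ᵥ (b * A * b) *ᵥ x).re := by
        have h3 := dot_self_eq (q *ᵥ x)
        rw [dot_conj, hqH, hqq] at h3
        have := congrArg Complex.re h3
        simp only [Complex.ofReal_re] at this
        exact this.symm
      have h2 : (‖euc (q *ᵥ x)‖ : ℝ) ^ 2 ≤ (‖a * C * a‖ * t) * ‖euc x‖ ^ 2 := by
        rw [h1]; exact hcore x
      have := Real.sqrt_le_sqrt h2
      rwa [Real.sqrt_sq (norm_nonneg _), Real.sqrt_mul hr, Real.sqrt_sq (norm_nonneg _)]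
        at this
    calc ‖b * A * b‖ = ‖q‖ * ‖q‖ := hnormq
      _ ≤ Real.sqrt (‖a * C * a‖ * t) * Real.sqrt (‖a * C * a‖ * t) := by
          exact mul_le_mul hqle hqle (norm_nonneg _) (Real.sqrt_nonneg _)
      _ = ‖a * C * a‖ * t := Real.mul_self_sqrt hr
  have : t * t ≤ ‖a * C * a‖ * t := by rw [htt]; exact hSbound
  exact le_of_mul_le_mul_right this htpos
end

section
/- Let A and B be n×n complex positive definite matrices. With A♯B := A^{1/2}(A^{-1/2}BA^{-1/2})^{1/2}A^{1/2} and A♮B := A^{1/2}(B^{1/2}A^{-1}B^{1/2})^{1/2}A^{1/2}, the spectral norm satisfies ‖A^{1/2}B^{1/2}‖² ≤ ‖A♯B‖ · ‖A♮B‖. -/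
open scoped ComplexOrder Matrix Classical

/-- The geometric mean `A ♯ B := A^{1/2} (A^{-1/2} B A^{-1/2})^{1/2} A^{1/2}` of positive
definite matrices. -/
noncomputable def geomMean {n : ℕ} (A B : Matrix (Fin n) (Fin n) ℂ) :
    Matrix (Fin n) (Fin n) ℂ :=
  sqrtm A * sqrtm ((sqrtm A)⁻¹ * B * (sqrtm A)⁻¹) * sqrtm A


open Matrix
open scoped Matrix.Norms.L2Operator

namespace SpecAux

variable {n : ℕ}

open scoped MatrixOrder in
lemma sqrtm_eq {A : Matrix (Fin n) (Fin n) ℂ} (h : A.PosSemidef) : sqrtm A = CFC.sqrt A := by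
  have ha : (0 : Matrix (Fin n) (Fin n) ℂ) ≤ A := Matrix.nonneg_iff_posSemidef.mpr h
  rw [CFC.sqrt_eq_real_sqrt A ha, cfcₙ_eq_cfc, IsHermitian.cfc_eq h.1]
  simp [sqrtm, h, IsHermitian.cfc, Function.comp_def]

open scoped MatrixOrder in
lemma sqrtm_posSemidef {A : Matrix (Fin n) (Fin n) ℂ} (h : A.PosSemidef) :
    (sqrtm A).PosSemidef := by
  rw [sqrtm_eq h]; exact Matrix.nonneg_iff_posSemidef.mp (CFC.sqrt_nonneg A)

open scoped MatrixOrder in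
lemma sqrtm_mul_self {A : Matrix (Fin n) (Fin n) ℂ} (h : A.PosSemidef) :
    sqrtm A * sqrtm A = A := by
  rw [sqrtm_eq h]; exact CFC.sqrt_mul_sqrt_self A (Matrix.nonneg_iff_posSemidef.mpr h)

open scoped MatrixOrder in
lemma eq_sqrtm {A C : Matrix (Fin n) (Fin n) ℂ} (hA : A.PosSemidef) (hC : C.PosSemidef)
    (h : C * C = A) : C = sqrtm A := by
  rw [sqrtm_eq hA]
  exact (CFC.sqrt_unique h (Matrix.nonneg_iff_posSemidef.mpr hC)).symm

lemma posDef_of_posSemidef_isUnit {M : Matrix (Fin n) (Fin n) ℂ} (hM : M.PosSemidef)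
    (h : IsUnit M) : M.PosDef := by
  refine posDef_iff_dotProduct_mulVec.mpr
    ⟨hM.1, fun x hx => lt_of_le_of_ne (hM.dotProduct_mulVec_nonneg x) fun heq => hx ?_⟩
  have h0 : M *ᵥ x = 0 := (hM.dotProduct_mulVec_zero_iff x).mp heq.symm
  have hinj := Matrix.mulVec_injective_iff_isUnit.mpr h
  have : M *ᵥ x = M *ᵥ 0 := by rw [h0, Matrix.mulVec_zero]
  exact hinj this

lemma sqrtm_posDef {A : Matrix (Fin n) (Fin n) ℂ} (h : A.PosDef) : (sqrtm A).PosDef := by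
  refine posDef_of_posSemidef_isUnit (sqrtm_posSemidef h.posSemidef) ?_
  rw [Matrix.isUnit_iff_isUnit_det]
  have : (sqrtm A).det * (sqrtm A).det = A.det := by
    rw [← Matrix.det_mul, sqrtm_mul_self h.posSemidef]
  have hdet : IsUnit ((sqrtm A).det * (sqrtm A).det) := by
    rw [this]; exact h.det_pos.ne'.isUnit
  exact isUnit_of_mul_isUnit_left hdet

lemma posDef_conj {B X : Matrix (Fin n) (Fin n) ℂ} (hB : B.PosDef) (hX : IsUnit X) :
    (X * B * Xᴴ).PosDef := by
  refine posDef_of_posSemidef_isUnit (hB.posSemidef.mul_mul_conjTranspose_same X) ?_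
  rw [Matrix.isUnit_iff_isUnit_det, Matrix.det_mul, Matrix.det_mul, Matrix.det_conjTranspose]
  exact ((hX.map Matrix.detMonoidHom).mul (hB.isUnit.map Matrix.detMonoidHom)).mul
    ((hX.map Matrix.detMonoidHom).star)

end SpecAux

namespace SpecAux

lemma specNorm_eq {m n : ℕ} (X : Matrix (Fin m) (Fin n) ℂ) : specNorm X = ‖X‖ :=
  (Matrix.l2_opNorm_def X).symm

theorem main {n : ℕ}
    (A B : Matrix (Fin n) (Fin n) ℂ) (hA : A.PosDef) (hB : B.PosDef) :
    specNorm (sqrtm A * sqrtm B) ^ 2 ≤ specNorm (geomMean A B) * specNorm (naturalMean A B) := by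
  classical
  set S := sqrtm A with hSdef
  set T := sqrtm B with hTdef
  have hS : S.PosDef := sqrtm_posDef hA
  have hT : T.PosDef := sqrtm_posDef hB
  have hSS : S * S = A := sqrtm_mul_self hA.posSemidef
  have hTT : T * T = B := sqrtm_mul_self hB.posSemidef
  have hSdet : IsUnit S.det := hS.det_pos.ne'.isUnit
  have hSi : S⁻¹ * S = 1 := Matrix.nonsing_inv_mul S hSdet
  have hSi' : S * S⁻¹ = 1 := Matrix.mul_nonsing_inv S hSdet
  have hM1 : (S⁻¹ * B * S⁻¹).PosDef := by
    have h := posDef_conj hB hS.inv.isUnit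
    rwa [hS.isHermitian.inv.eq] at h
  set P := sqrtm (S⁻¹ * B * S⁻¹) with hPdef
  have hP : P.PosDef := sqrtm_posDef hM1
  have hPP : P * P = S⁻¹ * B * S⁻¹ := sqrtm_mul_self hM1.posSemidef
  have hPdet : IsUnit P.det := hP.det_pos.ne'.isUnit
  have hPi : P⁻¹ * P = 1 := Matrix.nonsing_inv_mul P hPdet
  have hPi' : P * P⁻¹ = 1 := Matrix.mul_nonsing_inv P hPdet
  have hM2 : (T * A⁻¹ * T).PosDef := by
    have h := posDef_conj hA.inv hT.isUnit
    rwa [hT.isHermitian.eq] at h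
  set Q := sqrtm (T * A⁻¹ * T) with hQdef
  set R := sqrtm P with hRdef
  have hR : R.PosSemidef := sqrtm_posSemidef hP.posSemidef
  have hRR : R * R = P := sqrtm_mul_self hP.posSemidef
  set U := T * S⁻¹ * P⁻¹ with hUdef
  have hUH : Uᴴ = P⁻¹ * S⁻¹ * T := by
    rw [hUdef, Matrix.conjTranspose_mul, Matrix.conjTranspose_mul,
      hT.isHermitian.eq, hS.isHermitian.inv.eq, hP.isHermitian.inv.eq, mul_assoc]
  -- cancellation helpers
  have cS : ∀ C : Matrix (Fin n) (Fin n) ℂ, S * (S⁻¹ * C) = C := fun C => by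
    rw [← mul_assoc, hSi', one_mul]
  have cS' : ∀ C : Matrix (Fin n) (Fin n) ℂ, S⁻¹ * (S * C) = C := fun C => by
    rw [← mul_assoc, hSi, one_mul]
  have cP : ∀ C : Matrix (Fin n) (Fin n) ℂ, P * (P⁻¹ * C) = C := fun C => by
    rw [← mul_assoc, hPi', one_mul]
  have cP' : ∀ C : Matrix (Fin n) (Fin n) ℂ, P⁻¹ * (P * C) = C := fun C => by
    rw [← mul_assoc, hPi, one_mul]
  have cT : ∀ C : Matrix (Fin n) (Fin n) ℂ, T * (T * C) = B * C := fun C => by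
    rw [← mul_assoc, hTT]
  have cR : ∀ C : Matrix (Fin n) (Fin n) ℂ, R * (R * C) = P * C := fun C => by
    rw [← mul_assoc, hRR]
  have cPP : ∀ C : Matrix (Fin n) (Fin n) ℂ, P * (P * C) = S⁻¹ * (B * (S⁻¹ * C)) := fun C => by
    rw [← mul_assoc, hPP, mul_assoc, mul_assoc]
  have hAinv : A⁻¹ = S⁻¹ * S⁻¹ := by rw [← hSS, Matrix.mul_inv_rev]
  -- U is unitary
  have hUU : Uᴴ * U = 1 := by
    rw [hUH, hUdef]
    simp only [mul_assoc]
    rw [cT, ← cPP, cP', hPi']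
  have cU : ∀ C : Matrix (Fin n) (Fin n) ℂ, Uᴴ * (U * C) = C := fun C => by
    rw [← mul_assoc, hUU, one_mul]
  -- key factorization
  have E1 : S * U * R * (R * S) = S * T := by
    simp only [hUdef, mul_assoc]
    rw [cR, cP', hSi, mul_one]
  -- Q = U * P * Uᴴ
  have hQ' : U * P * Uᴴ = Q := by
    refine eq_sqrtm hM2.posSemidef ?_ ?_
    · have h := Matrix.posSemidef_self_mul_conjTranspose (U * R)
      have e : U * R * (U * R)ᴴ = U * P * Uᴴ := by
        rw [Matrix.conjTranspose_mul, hR.isHermitian.eq]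
        simp only [mul_assoc]
        rw [cR]
      rwa [e] at h
    · have e : U * P * Uᴴ * (U * P * Uᴴ) = U * (P * (Uᴴ * (U * (P * Uᴴ)))) := by
        simp only [mul_assoc]
      rw [e, cU]
      rw [hUdef, hUH, hAinv]
      simp only [mul_assoc]
      rw [cP', cP]
  -- expressions for the means
  have hG : geomMean A B = (R * S)ᴴ * (R * S) := by
    rw [geomMean, ← hSdef, ← hPdef, Matrix.conjTranspose_mul, hR.isHermitian.eq,
      hS.isHermitian.eq]
    simp only [mul_assoc]
    rw [cR]
  have hN : naturalMean A B = (S * U * R) * (S * U * R)ᴴ := by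
    have eR : (S * U * R)ᴴ = R * (Uᴴ * S) := by
      rw [Matrix.conjTranspose_mul, Matrix.conjTranspose_mul, hR.isHermitian.eq,
        hS.isHermitian.eq]
    rw [naturalMean, ← hSdef, ← hTdef, ← hQdef, ← hQ', eR]
    simp only [mul_assoc]
    rw [cR]
  -- norm computations
  simp only [specNorm_eq]
  have key : ‖S * T‖ ≤ ‖S * U * R‖ * ‖R * S‖ := by
    rw [← E1]
    exact Matrix.l2_opNorm_mul _ _
  have eG : ‖R * S‖ * ‖R * S‖ = ‖geomMean A B‖ := by
    rw [hG, Matrix.l2_opNorm_conjTranspose_mul_self]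
  have eN : ‖S * U * R‖ * ‖S * U * R‖ = ‖naturalMean A B‖ := by
    have h := Matrix.l2_opNorm_conjTranspose_mul_self (S * U * R)ᴴ
    rw [Matrix.conjTranspose_conjTranspose, Matrix.l2_opNorm_conjTranspose] at h
    rw [hN, h]
  calc ‖S * T‖ ^ 2 ≤ (‖S * U * R‖ * ‖R * S‖) ^ 2 :=
        pow_le_pow_left₀ (norm_nonneg _) key 2
    _ = (‖S * U * R‖ * ‖S * U * R‖) * (‖R * S‖ * ‖R * S‖) := by ring
    _ = ‖naturalMean A B‖ * ‖geomMean A B‖ := by rw [eN, eG]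
    _ = ‖geomMean A B‖ * ‖naturalMean A B‖ := mul_comm _ _

end SpecAux


/-- For positive definite `A, B`, `‖A^{1/2} B^{1/2}‖² ≤ ‖A ♯ B‖ ⬝ ‖A ♮ B‖`
for the spectral norm. -/
theorem sq_specNorm_le_specNorm_geomMean_mul_naturalMean {n : ℕ}
    (A B : Matrix (Fin n) (Fin n) ℂ) (hA : A.PosDef) (hB : B.PosDef) :
    specNorm (sqrtm A * sqrtm B) ^ 2 ≤ specNorm (geomMean A B) * specNorm (naturalMean A B) :=
  SpecAux.main A B hA hB
end
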